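/- Let H be a Hilbert space, S a bounded self-adjoint Fredholm operator, B = ⟨S·,·⟩ the associated Fredholm symmetric bilinear form, and W ⊆ H a closed subspace such that: (a) B|_W is strongly negative definite (there is k > 0 with −B(x,x) ≥ k‖x‖² for x ∈ W), and (b) B is positive semi-definite on the B-orthogonal complement W^{⊥_B} = S⁻¹(W^⊥). Then W is commensurable with the negative eigenspace V⁻(S) of S, and dim_W(V⁻(S)) = 0. -/

import Mathlib

open scoped RealInnerProductSpace

/-- Two closed subspaces `V`, `W` of a Hilbert space are commensurable if the orthogonal
projection `P_W|_V : V → W` is Fredholm; equivalently, `(V, Wᗮ)` is a Fredholm pair: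
`V ⊓ Wᗮ` and `Vᗮ ⊓ W` are finite-dimensional and `V ⊔ Wᗮ` is closed. -/
def CommensurableSubspaces {H : Type*} [NormedAddCommGroup H] [InnerProductSpace ℝ H]
    (V W : Submodule ℝ H) : Prop :=
  FiniteDimensional ℝ ↥(V ⊓ Wᗮ) ∧ FiniteDimensional ℝ ↥(Vᗮ ⊓ W) ∧
    IsClosed ((V ⊔ Wᗮ : Submodule ℝ H) : Set H)

/-- The relative dimension of `V` with respect to `W`:
`dim_W(V) = dim(V ∩ W^⊥) − dim(V^⊥ ∩ W)`. -/
noncomputable def relDim {H : Type*} [NormedAddCommGroup H] [InnerProductSpace ℝ H]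
    (V W : Submodule ℝ H) : ℤ :=
  (Module.finrank ℝ ↥(V ⊓ Wᗮ) : ℤ) - (Module.finrank ℝ ↥(Vᗮ ⊓ W) : ℤ)

/-- **Commensurability with the negative spectral subspace.**
Let `S` be a bounded self-adjoint Fredholm operator on a Hilbert space, with negative
spectral subspace `Vneg` (characterized by: closed, `S`-invariant, `S` strongly negative
on it, `S`-invariant orthocomplement on which `S` is positive semi-definite). If the form
`B = ⟪S·,·⟫` is strongly negative definite on a closed subspace `W` and positive
semi-definite on `W^{⊥_B} = S⁻¹(W^⊥)`, then `W` is commensurable with `Vneg` and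
`dim_W(Vneg) = 0`. -/
lemma aux_le_of_orth {H : Type*} [NormedAddCommGroup H] [InnerProductSpace ℝ H] [CompleteSpace H]
    (K R : Submodule ℝ H) (hR : IsClosed (R : Set H)) (hRK : R ≤ K)
    (h : Rᗮ ⊓ K = ⊥) : K ≤ R := by
  intro x hx
  haveI : CompleteSpace R := hR.completeSpace_coe
  have h1 : x - ↑(Submodule.orthogonalProjectionOnto R x) ∈ Rᗮ := Submodule.sub_starProjection_mem_orthogonal x
  have h2 : x - ↑(Submodule.orthogonalProjectionOnto R x) ∈ K := K.sub_mem hx (hRK (SetLike.coe_mem _))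
  have h3 : x - ↑(Submodule.orthogonalProjectionOnto R x) ∈ Rᗮ ⊓ K := ⟨h1, h2⟩
  rw [h, Submodule.mem_bot, sub_eq_zero] at h3
  rw [h3]
  exact SetLike.coe_mem _

theorem commensurable_negative_eigenspace_of_negative_definite
    {H : Type*} [NormedAddCommGroup H] [InnerProductSpace ℝ H] [CompleteSpace H]
    (S : H →L[ℝ] H)
    (hS : ∀ x y : H, ⟪S x, y⟫ = ⟪x, S y⟫)
    (hFred : FiniteDimensional ℝ (LinearMap.ker (S : H →ₗ[ℝ] H)) ∧
      IsClosed ((LinearMap.range (S : H →ₗ[ℝ] H) : Submodule ℝ H) : Set H) ∧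
      FiniteDimensional ℝ (H ⧸ LinearMap.range (S : H →ₗ[ℝ] H)))
    (Vneg : Submodule ℝ H) (hVc : IsClosed (Vneg : Set H))
    (hVinv : ∀ x ∈ Vneg, S x ∈ Vneg)
    (hVneg : ∃ c > 0, ∀ x ∈ Vneg, ⟪S x, x⟫ ≤ -c * ‖x‖ ^ 2)
    (hVperp : ∀ x ∈ Vnegᗮ, S x ∈ Vnegᗮ ∧ 0 ≤ ⟪S x, x⟫)
    (W : Submodule ℝ H) (hWc : IsClosed (W : Set H))
    (ha : ∃ k > 0, ∀ x ∈ W, k * ‖x‖ ^ 2 ≤ -⟪S x, x⟫)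
    (hb : ∀ x ∈ Submodule.comap (S.toLinearMap) Wᗮ, 0 ≤ ⟪S x, x⟫) :
    CommensurableSubspaces W Vneg ∧ relDim Vneg W = 0 := by
  obtain ⟨c, hc, hcneg⟩ := hVneg
  obtain ⟨k, hk, hkW⟩ := ha
  haveI : CompleteSpace Vneg := hVc.completeSpace_coe
  haveI : CompleteSpace W := hWc.completeSpace_coe
  have hzero : ∀ x : H, ‖x‖ ^ 2 ≤ 0 → x = 0 := by
    intro x hx
    have h1 : ‖x‖ ^ 2 = 0 := le_antisymm hx (sq_nonneg _)
    exact norm_eq_zero.mp (sq_eq_zero_iff.mp h1)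
  -- Step A : W ⊓ Vnegᗮ = ⊥
  have hWVo : W ⊓ Vnegᗮ = ⊥ := by
    rw [Submodule.eq_bot_iff]
    rintro x ⟨hxW, hxV⟩
    have h1 := hkW x hxW
    have h2 := (hVperp x hxV).2
    exact hzero x (by nlinarith)
  -- S bounded below on Vneg
  have hSbb : ∀ v : H, v ∈ Vneg → c * ‖v‖ ≤ ‖S v‖ := by
    intro v hv
    rcases eq_or_ne v 0 with rfl | hne
    · simp
    · have h1 := hcneg v hv
      have h2 : -⟪S v, v⟫ ≤ ‖S v‖ * ‖v‖ := by
        have h3 := real_inner_le_norm (-(S v)) v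
        simpa [inner_neg_left] using h3
      have hn : 0 < ‖v‖ := norm_pos_iff.mpr hne
      have h4 : c * ‖v‖ * ‖v‖ ≤ ‖S v‖ * ‖v‖ := by nlinarith
      exact le_of_mul_le_mul_right h4 hn
  -- Step C : Vneg ≤ S(Vneg)
  set T1 : Vneg →L[ℝ] H := S.comp Vneg.subtypeL with hT1def
  have hR1le : LinearMap.range (T1 : Vneg →ₗ[ℝ] H) ≤ Vneg := by
    rintro _ ⟨z, rfl⟩; exact hVinv z z.2
  have hR1closed : IsClosed ((LinearMap.range (T1 : Vneg →ₗ[ℝ] H) : Submodule ℝ H) : Set H) := by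
    have hA : AntilipschitzWith (.mk c hc.le : NNReal)⁻¹ T1 := by
      apply T1.antilipschitz_of_bound
      intro z
      have h1 := hSbb z z.2
      rw [NNReal.coe_inv, NNReal.coe_mk, ← div_eq_inv_mul, le_div_iff₀ hc]
      show ‖(z : H)‖ * c ≤ ‖S (z : H)‖
      linarith
    have h5 := hA.isClosed_range T1.uniformContinuous
    have h6 : ((LinearMap.range (T1 : Vneg →ₗ[ℝ] H) : Submodule ℝ H) : Set H) = Set.range T1 := by
      ext x; simp [LinearMap.mem_range]
    rw [h6]; exact h5
  have hVR1 : Vneg ≤ LinearMap.range (T1 : Vneg →ₗ[ℝ] H) := by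
    apply aux_le_of_orth _ _ hR1closed hR1le
    rw [Submodule.eq_bot_iff]
    rintro v ⟨hvo, hvV⟩
    have h0 : ⟪S v, v⟫ = 0 :=
      (Submodule.mem_orthogonal _ v).mp hvo (S v) ⟨⟨v, hvV⟩, rfl⟩
    have h1 := hcneg v hvV
    exact hzero v (by nlinarith)
  -- Step D : Vneg ⊓ Wᗮ = ⊥
  have hVWo : Vneg ⊓ Wᗮ = ⊥ := by
    rw [Submodule.eq_bot_iff]
    rintro x ⟨hxV, hxW⟩
    obtain ⟨v, hv⟩ := hVR1 hxV
    have hcm : (v : H) ∈ Submodule.comap S.toLinearMap Wᗮ := by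
      rw [Submodule.mem_comap]
      show S (v : H) ∈ Wᗮ
      rw [show S (v : H) = T1 v from rfl, show T1 v = x from hv]; exact hxW
    have h1 := hb _ hcm
    have h2 := hcneg (v : H) v.2
    have h4 : (v : H) = 0 := hzero _ (by nlinarith)
    rw [← show T1 v = x from hv, show T1 v = S (v : H) from rfl, h4, map_zero]
  -- Step E : the orthogonal projection onto Vneg restricted to W
  set T2 : W →L[ℝ] H :=
    Vneg.subtypeL.comp ((Submodule.orthogonalProjectionOnto Vneg).comp W.subtypeL) with hT2def
  have hT2 : ∀ w : W, T2 w = (Submodule.orthogonalProjectionOnto Vneg (w : H) : H) := fun w => rfl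
  have key : ∀ w : W, k * ‖(w : H)‖ ^ 2 ≤ (‖S‖ + 1) * ‖T2 w‖ ^ 2 := by
    intro w
    set v : H := T2 w with hv
    have hvV : v ∈ Vneg := SetLike.coe_mem _
    have hu : (w : H) - v ∈ Vnegᗮ := Submodule.sub_starProjection_mem_orthogonal _
    set u : H := (w : H) - v with hudef
    have hwvu : (w : H) = v + u := by rw [hudef]; abel
    have hcross1 : ⟪S v, u⟫ = 0 :=
      Submodule.inner_right_of_mem_orthogonal (hVinv v hvV) hu
    have hcross2 : ⟪S u, v⟫ = 0 := by
      rw [hS u v, real_inner_comm]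
      exact hcross1
    have hsplit : ⟪S (w : H), (w : H)⟫ = ⟪S v, v⟫ + ⟪S u, u⟫ := by
      rw [hwvu, map_add, inner_add_left, inner_add_right, inner_add_right,
        hcross1, hcross2]
      ring
    have hupos : 0 ≤ ⟪S u, u⟫ := (hVperp u hu).2
    have h1 := hkW (w : H) w.2
    have h2 : -⟪S v, v⟫ ≤ ‖S v‖ * ‖v‖ := by
      have h3 := real_inner_le_norm (-(S v)) v
      simpa [inner_neg_left] using h3
    have h3 : ‖S v‖ ≤ ‖S‖ * ‖v‖ := S.le_opNorm v
    have h4 : ‖S v‖ * ‖v‖ ≤ ‖S‖ * ‖v‖ * ‖v‖ :=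
      mul_le_mul_of_nonneg_right h3 (norm_nonneg v)
    have h6 : ‖v‖ * ‖v‖ = ‖v‖ ^ 2 := by ring
    have h7 : ‖S‖ * ‖v‖ * ‖v‖ = ‖S‖ * ‖v‖ ^ 2 := by ring
    linarith [sq_nonneg ‖v‖]
  have hSpos : (0:ℝ) < ‖S‖ + 1 := by positivity
  set m : ℝ := Real.sqrt (k / (‖S‖ + 1)) with hmdef
  have hm : 0 < m := Real.sqrt_pos.mpr (div_pos hk hSpos)
  have hbb2 : ∀ w : W, m * ‖(w : H)‖ ≤ ‖T2 w‖ := by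
    intro w
    have hkey := key w
    have hm2 : m ^ 2 = k / (‖S‖ + 1) := Real.sq_sqrt (le_of_lt (div_pos hk hSpos))
    have h4 : (m * ‖(w : H)‖) ^ 2 ≤ ‖T2 w‖ ^ 2 := by
      rw [mul_pow, hm2, div_mul_eq_mul_div, div_le_iff₀ hSpos]
      exact hkey.trans_eq (mul_comm _ _)
    calc m * ‖(w : H)‖ = Real.sqrt ((m * ‖(w : H)‖) ^ 2) :=
          (Real.sqrt_sq (by positivity)).symm
      _ ≤ Real.sqrt (‖T2 w‖ ^ 2) := Real.sqrt_le_sqrt h4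
      _ = ‖T2 w‖ := Real.sqrt_sq (norm_nonneg _)
  have hR2le : LinearMap.range (T2 : W →ₗ[ℝ] H) ≤ Vneg := by
    rintro _ ⟨w, rfl⟩; exact SetLike.coe_mem _
  have hR2closed : IsClosed ((LinearMap.range (T2 : W →ₗ[ℝ] H) : Submodule ℝ H) : Set H) := by
    have hA : AntilipschitzWith (.mk m hm.le : NNReal)⁻¹ T2 := by
      apply T2.antilipschitz_of_bound
      intro z
      rw [NNReal.coe_inv, NNReal.coe_mk, ← div_eq_inv_mul, le_div_iff₀ hm]
      have := hbb2 z
      show ‖(z : H)‖ * m ≤ ‖T2 z‖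
      linarith
    have h5 := hA.isClosed_range T2.uniformContinuous
    have h6 : ((LinearMap.range (T2 : W →ₗ[ℝ] H) : Submodule ℝ H) : Set H) = Set.range T2 := by
      ext x; simp [LinearMap.mem_range]
    rw [h6]; exact h5
  have hVR2 : Vneg ≤ LinearMap.range (T2 : W →ₗ[ℝ] H) := by
    apply aux_le_of_orth _ _ hR2closed hR2le
    rw [Submodule.eq_bot_iff]
    rintro v ⟨hvo, hvV⟩
    have hvW : v ∈ Wᗮ := by
      rw [Submodule.mem_orthogonal]
      intro w hw
      have hp1 : ⟪T2 ⟨w, hw⟩, v⟫ = 0 :=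
        (Submodule.mem_orthogonal _ v).mp hvo _ ⟨⟨w, hw⟩, rfl⟩
      have hmem : w - T2 ⟨w, hw⟩ ∈ Vnegᗮ := Submodule.sub_starProjection_mem_orthogonal w
      have hp2 : ⟪w - T2 ⟨w, hw⟩, v⟫ = 0 := by
        rw [real_inner_comm]
        exact Submodule.inner_right_of_mem_orthogonal hvV hmem
      have := inner_sub_left (𝕜 := ℝ) w (T2 ⟨w, hw⟩) v
      rw [hp2] at this
      linarith [hp1, this.symm]
    have hbot : v ∈ Vneg ⊓ Wᗮ := ⟨hvV, hvW⟩
    rw [hVWo, Submodule.mem_bot] at hbot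
    exact hbot
  -- Step F : W ⊔ Vnegᗮ = ⊤
  have hsup : W ⊔ Vnegᗮ = ⊤ := by
    rw [eq_top_iff]
    intro y _
    have hPy : (Submodule.orthogonalProjectionOnto Vneg y : H) ∈ Vneg := SetLike.coe_mem _
    obtain ⟨w, hw⟩ := hVR2 hPy
    have hy1 : y - (Submodule.orthogonalProjectionOnto Vneg y : H) ∈ Vnegᗮ :=
      Submodule.sub_starProjection_mem_orthogonal y
    have hy2 : (w : H) - T2 w ∈ Vnegᗮ := Submodule.sub_starProjection_mem_orthogonal (w : H)
    have hmem : y - (w : H) ∈ Vnegᗮ := by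
      have hsub := Submodule.sub_mem _ hy1 hy2
      have heq : y - (Submodule.orthogonalProjectionOnto Vneg y : H) - ((w : H) - T2 w)
          = y - (w : H) := by rw [show T2 w = _ from hw]; abel
      rwa [heq] at hsub
    exact Submodule.mem_sup.mpr ⟨w, w.2, y - (w : H), hmem, by abel⟩
  have hWoV : Wᗮ ⊓ Vneg = ⊥ := by rw [inf_comm]; exact hVWo
  have hVoW : Vnegᗮ ⊓ W = ⊥ := by rw [inf_comm]; exact hWVo
  refine ⟨⟨?_, ?_, ?_⟩, ?_⟩
  · rw [hWVo]; infer_instance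
  · rw [hWoV]; infer_instance
  · rw [hsup, Submodule.top_coe]; exact isClosed_univ
  · show (Module.finrank ℝ ↥(Vneg ⊓ Wᗮ) : ℤ) - (Module.finrank ℝ ↥(Vnegᗮ ⊓ W) : ℤ) = 0
    rw [hVWo, hVoW]
    simp
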